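/- Let P(n) be the probability that n distinct nonzero vectors of Z_2^6, chosen uniformly at random, sum to zero. Then P(2n) = P(2n-1) for all 1 ≤ n ≤ 31. -/

import Mathlib

def numMatched (n : ℕ) : ℕ :=
  (((Finset.univ.filter (fun x : Fin 6 → ZMod 2 => x ≠ 0)).powersetCard n).filter
    (fun S => ∑ x ∈ S, x = 0)).card

noncomputable def P (n : ℕ) : ℚ := (numMatched n : ℚ) / (Nat.choose 63 n : ℚ)

private abbrev Gv := Fin 6 → ZMod 2

private lemma gv_add_self (v : Gv) : v + v = 0 := by
  funext i
  exact CharTwo.add_self_eq_zero (v i)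

private lemma gv_card : Fintype.card Gv = 64 := by
  simp [Gv]

private lemma transl_inj (v : Gv) : Function.Injective (fun x : Gv => x + v) :=
  add_left_injective v

private lemma double_transl (v : Gv) (S : Finset Gv) :
    (S.image (fun x => x + v)).image (fun x => x + v) = S := by
  rw [Finset.image_image]
  have h : ((fun x : Gv => x + v) ∘ (fun x => x + v)) = id := by
    funext x; simp [Function.comp, add_assoc, gv_add_self]
  rw [h, Finset.image_id]

private lemma sum_transl (v : Gv) (S : Finset Gv) :
    ∑ x ∈ S.image (fun x => x + v), x = (∑ x ∈ S, x) + S.card • v := by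
  rw [Finset.sum_image (fun x _ y _ h => transl_inj v h)]
  rw [Finset.sum_add_distrib, Finset.sum_const]

private lemma even_smul_zero (n : ℕ) (v : Gv) : (2 * n) • v = 0 := by
  rw [mul_comm, mul_nsmul, two_nsmul, gv_add_self]

private lemma key (n : ℕ) (h1 : 1 ≤ n) (h31 : n ≤ 31) :
    (64 - 2*n) * numMatched (2*n - 1) = (2*n) * numMatched (2*n) := by
  classical
  set V : Finset Gv := Finset.univ.filter (fun x => x ≠ 0) with hV
  set A : Finset (Finset Gv) := (V.powersetCard (2*n-1)).filter (fun S => ∑ x ∈ S, x = 0) with hA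
  set B : Finset (Finset Gv) := (V.powersetCard (2*n)).filter (fun S => ∑ x ∈ S, x = 0) with hB
  have hMA : numMatched (2*n-1) = A.card := rfl
  have hMB : numMatched (2*n) = B.card := rfl
  have hVmem : ∀ x : Gv, x ∈ V ↔ x ≠ 0 := by intro x; simp [hV]
  have hAmem : ∀ S, S ∈ A ↔ (S ⊆ V ∧ S.card = 2*n-1 ∧ ∑ x ∈ S, x = 0) := by
    intro S; simp [hA, Finset.mem_powersetCard, and_assoc]
  have hBmem : ∀ S, S ∈ B ↔ (S ⊆ V ∧ S.card = 2*n ∧ ∑ x ∈ S, x = 0) := by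
    intro S; simp [hB, Finset.mem_powersetCard, and_assoc]
  set D : Finset (Finset Gv × Gv) :=
    A.biUnion (fun S => ((insert 0 S)ᶜ).image (fun v => (S, v))) with hD
  set E : Finset (Finset Gv × Gv) :=
    B.biUnion (fun T => T.image (fun u => (T, u))) with hE
  have hDmem : ∀ p : Finset Gv × Gv, p ∈ D ↔ (p.1 ∈ A ∧ p.2 ∉ insert 0 p.1) := by
    intro p
    simp only [hD, Finset.mem_biUnion, Finset.mem_image, Finset.mem_compl]
    constructor
    · rintro ⟨S, hS, v, hv, rfl⟩; exact ⟨hS, hv⟩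
    · rintro ⟨ha, hb⟩; exact ⟨p.1, ha, p.2, hb, rfl⟩
  have hEmem : ∀ p : Finset Gv × Gv, p ∈ E ↔ (p.1 ∈ B ∧ p.2 ∈ p.1) := by
    intro p
    simp only [hE, Finset.mem_biUnion, Finset.mem_image]
    constructor
    · rintro ⟨T, hT, u, hu, rfl⟩; exact ⟨hT, hu⟩
    · rintro ⟨ha, hb⟩; exact ⟨p.1, ha, p.2, hb, rfl⟩
  have h0A : ∀ S ∈ A, (0 : Gv) ∉ S := by
    intro S hS h0
    have := ((hAmem S).1 hS).1 h0
    exact ((hVmem 0).1 this) rfl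
  have h0B : ∀ T ∈ B, (0 : Gv) ∉ T := by
    intro T hT h0
    have := ((hBmem T).1 hT).1 h0
    exact ((hVmem 0).1 this) rfl
  have hDcard : D.card = (64 - 2*n) * A.card := by
    rw [hD, Finset.card_biUnion]
    · have h : ∀ S ∈ A, (((insert 0 S)ᶜ).image (fun v => (S, v))).card = 64 - 2*n := by
        intro S hS
        rw [Finset.card_image_of_injective _ (fun a b h => by simpa using congrArg Prod.snd h)]
        rw [Finset.card_compl, gv_card, Finset.card_insert_of_notMem (h0A S hS),
          ((hAmem S).1 hS).2.1]
        omega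
      rw [Finset.sum_congr rfl h, Finset.sum_const, smul_eq_mul, mul_comm]
    · intro S hS T hT hST
      rw [Function.onFun, Finset.disjoint_left]
      rintro p hp hq
      obtain ⟨v, -, rfl⟩ := Finset.mem_image.1 hp
      obtain ⟨u, -, he⟩ := Finset.mem_image.1 hq
      exact hST (congrArg Prod.fst he).symm
  have hEcard : E.card = (2*n) * B.card := by
    rw [hE, Finset.card_biUnion]
    · have h : ∀ T ∈ B, (T.image (fun u => (T, u))).card = 2*n := by
        intro T hT
        rw [Finset.card_image_of_injective _ (fun a b h => by simpa using congrArg Prod.snd h)]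
        exact ((hBmem T).1 hT).2.1
      rw [Finset.sum_congr rfl h, Finset.sum_const, smul_eq_mul, mul_comm]
    · intro S hS T hT hST
      rw [Function.onFun, Finset.disjoint_left]
      rintro p hp hq
      obtain ⟨v, -, rfl⟩ := Finset.mem_image.1 hp
      obtain ⟨u, -, he⟩ := Finset.mem_image.1 hq
      exact hST (congrArg Prod.fst he).symm
  have hcard : D.card = E.card := by
    apply Finset.card_nbij'
      (i := fun p => ((insert 0 p.1).image (fun x => x + p.2), p.2))
      (j := fun p => ((p.1.image (fun x => x + p.2)).erase 0, p.2))
    · -- forward maps-to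
      rintro ⟨S, v⟩ hp
      obtain ⟨hS, hv⟩ := (hDmem _).1 hp
      obtain ⟨hsub, hcardS, hsum⟩ := (hAmem S).1 hS
      have h0S : (0 : Gv) ∉ S := h0A S hS
      simp only [Finset.mem_coe]
      rw [hEmem]
      constructor
      · rw [hBmem]
        refine ⟨?_, ?_, ?_⟩
        · intro y hy
          obtain ⟨x, hx, rfl⟩ := Finset.mem_image.1 hy
          rw [hVmem]
          intro hxv
          have : x = v := by
            have := congrArg (fun z => z + v) hxv
            simpa [add_assoc, gv_add_self] using this
          exact hv (this ▸ hx)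
        · rw [Finset.card_image_of_injective _ (transl_inj v),
            Finset.card_insert_of_notMem h0S, hcardS]
          omega
        · rw [sum_transl, Finset.sum_insert h0S, hsum,
            Finset.card_insert_of_notMem h0S, hcardS]
          have h2n : 2*n - 1 + 1 = 2*n := by omega
          rw [h2n, even_smul_zero]
          simp
      · exact Finset.mem_image.2 ⟨0, Finset.mem_insert_self _ _, by simp⟩
    · -- backward maps-to
      rintro ⟨T, u⟩ hp
      obtain ⟨hT, hu⟩ := (hEmem _).1 hp
      obtain ⟨hsub, hcardT, hsum⟩ := (hBmem T).1 hT
      have h0T : (0 : Gv) ∉ T := h0B T hT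
      have h0img : (0 : Gv) ∈ T.image (fun x => x + u) :=
        Finset.mem_image.2 ⟨u, hu, gv_add_self u⟩
      have hune : u ≠ 0 := (hVmem u).1 (hsub hu)
      simp only [Finset.mem_coe]
      rw [hDmem]
      constructor
      · rw [hAmem]
        refine ⟨?_, ?_, ?_⟩
        · intro y hy
          rw [hVmem]
          exact Finset.ne_of_mem_erase hy
        · rw [Finset.card_erase_of_mem h0img,
            Finset.card_image_of_injective _ (transl_inj u), hcardT]
        · show ∑ x ∈ (Finset.image (fun x => x + u) T).erase 0, x = 0
          rw [Finset.sum_erase (f := fun x : Gv => x) _ rfl, sum_transl, hsum, hcardT, even_smul_zero]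
          simp
      · intro hmem
        rcases Finset.mem_insert.1 hmem with h | h
        · exact hune h
        · have := Finset.mem_of_mem_erase h
          obtain ⟨x, hx, hxe⟩ := Finset.mem_image.1 this
          have : x = 0 := by
            have := congrArg (fun z => z + u) hxe
            simpa [add_assoc, gv_add_self] using this
          exact h0T (this ▸ hx)
    · -- left inverse
      rintro ⟨S, v⟩ hp
      obtain ⟨hS, hv⟩ := (hDmem _).1 hp
      have h0S : (0 : Gv) ∉ S := h0A S hS
      simp only [Prod.mk.injEq]
      refine ⟨?_, trivial⟩
      rw [double_transl, Finset.erase_insert h0S]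
    · -- right inverse
      rintro ⟨T, u⟩ hp
      obtain ⟨hT, hu⟩ := (hEmem _).1 hp
      have h0img : (0 : Gv) ∈ T.image (fun x => x + u) :=
        Finset.mem_image.2 ⟨u, hu, gv_add_self u⟩
      simp only [Prod.mk.injEq]
      refine ⟨?_, trivial⟩
      rw [Finset.insert_erase h0img, double_transl]
  rw [hMA, hMB, ← hDcard, ← hEcard, hcard]

theorem socks_P_even_eq_odd (n : ℕ) (h1 : 1 ≤ n) (h31 : n ≤ 31) :
    P (2 * n) = P (2 * n - 1) := by
  have hkey := key n h1 h31
  have hch : Nat.choose 63 (2*n) * (2*n) = Nat.choose 63 (2*n-1) * (64 - 2*n) := by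
    have h : 2*n - 1 + 1 = 2*n := by omega
    have hc := Nat.choose_succ_right_eq 63 (2*n-1)
    rw [h] at hc
    rw [hc]
    congr 1
    omega
  have hC1 : (0:ℚ) < (Nat.choose 63 (2*n-1) : ℚ) := by
    exact_mod_cast Nat.choose_pos (by omega : 2*n-1 ≤ 63)
  have hC2 : (0:ℚ) < (Nat.choose 63 (2*n) : ℚ) := by
    exact_mod_cast Nat.choose_pos (by omega : 2*n ≤ 63)
  have hnat : numMatched (2*n) * Nat.choose 63 (2*n-1)
      = numMatched (2*n-1) * Nat.choose 63 (2*n) := by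
    have h2n : 0 < 2*n := by omega
    apply Nat.eq_of_mul_eq_mul_left h2n
    calc 2*n * (numMatched (2*n) * Nat.choose 63 (2*n-1))
        = (2*n * numMatched (2*n)) * Nat.choose 63 (2*n-1) := by ring
      _ = ((64-2*n) * numMatched (2*n-1)) * Nat.choose 63 (2*n-1) := by rw [hkey]
      _ = numMatched (2*n-1) * (Nat.choose 63 (2*n-1) * (64-2*n)) := by ring
      _ = numMatched (2*n-1) * (Nat.choose 63 (2*n) * (2*n)) := by rw [hch]
      _ = 2*n * (numMatched (2*n-1) * Nat.choose 63 (2*n)) := by ring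
  unfold P
  rw [div_eq_div_iff (ne_of_gt hC2) (ne_of_gt hC1)]
  exact_mod_cast hnat
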